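/- Let A be a commutative left H-module algebra over a bialgebra H and F a normalized cocycle twist. Then the twisted star product a ⋆_F b = (F̄₁ ▷ a)·(F̄₂ ▷ b) is braided commutative with respect to the triangular R-matrix R = F₂₁F⁻¹: namely (R₂ ▷ b) ⋆_F (R₁ ▷ a) = a ⋆_F b for all a, b ∈ A. -/
import Mathlib


open TensorProduct

/-- Embedding of `H ⊗ H` into the first and second factors of `H ⊗ H ⊗ H`. -/
noncomputable def leg12 (K H : Type) [CommRing K] [Ring H] [Algebra K H] :
    H ⊗[K] H →ₐ[K] H ⊗[K] (H ⊗[K] H) :=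
  Algebra.TensorProduct.map (AlgHom.id K H) Algebra.TensorProduct.includeLeft

/-- Embedding of `H ⊗ H` into the second and third factors of `H ⊗ H ⊗ H`. -/
noncomputable def leg23 (K H : Type) [CommRing K] [Ring H] [Algebra K H] :
    H ⊗[K] H →ₐ[K] H ⊗[K] (H ⊗[K] H) :=
  Algebra.TensorProduct.includeRight

/-- Embedding of `H ⊗ H` into the first and third factors of `H ⊗ H ⊗ H`. -/
noncomputable def leg13 (K H : Type) [CommRing K] [Ring H] [Algebra K H] :
    H ⊗[K] H →ₐ[K] H ⊗[K] (H ⊗[K] H) :=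
  Algebra.TensorProduct.map (AlgHom.id K H) Algebra.TensorProduct.includeRight

/-- `Δ ⊗ id` as a map `H ⊗ H → H ⊗ (H ⊗ H)`. -/
noncomputable def copL (K H : Type) [CommRing K] [Ring H] [Bialgebra K H] :
    H ⊗[K] H →ₗ[K] H ⊗[K] (H ⊗[K] H) :=
  (TensorProduct.assoc K H H H).toLinearMap ∘ₗ
    TensorProduct.map Coalgebra.comul LinearMap.id

/-- `id ⊗ Δ` as a map `H ⊗ H → H ⊗ (H ⊗ H)`. -/
noncomputable def copR (K H : Type) [CommRing K] [Ring H] [Bialgebra K H] :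
    H ⊗[K] H →ₗ[K] H ⊗[K] (H ⊗[K] H) :=
  TensorProduct.map LinearMap.id Coalgebra.comul

/-- `ε ⊗ id : H ⊗ H → H`. -/
noncomputable def ctL (K H : Type) [CommRing K] [Ring H] [Bialgebra K H] :
    H ⊗[K] H →ₗ[K] H :=
  (TensorProduct.lid K H).toLinearMap ∘ₗ TensorProduct.map Coalgebra.counit LinearMap.id

/-- `id ⊗ ε : H ⊗ H → H`. -/
noncomputable def ctR (K H : Type) [CommRing K] [Ring H] [Bialgebra K H] :
    H ⊗[K] H →ₗ[K] H :=
  (TensorProduct.rid K H).toLinearMap ∘ₗ TensorProduct.map LinearMap.id Coalgebra.counit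
/-- The twisted star product `a ⋆_F b = (F̄₁ ▷ a) · (F̄₂ ▷ b)` determined by the
action `act` and the inverse twist `Finv`. -/
noncomputable def starF {K H A : Type} [CommRing K] [Ring H] [Bialgebra K H]
    [Ring A] [Algebra K A]
    (act : H →ₗ[K] A →ₗ[K] A) (Finv : H ⊗[K] H) (a b : A) : A :=
  LinearMap.mul' K A ((TensorProduct.map (act.flip a) (act.flip b)) Finv)

/-- For `G = Σ G₁ ⊗ G₂ ∈ H ⊗ H`, the element `Σ (G₂ ▷ a) ⊗ G₁` of `A ⊗ H`
(e.g. the target map `t(a) = (R₂ ▷ a) ⋊ R₁` of the smash product bialgebroid). -/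
noncomputable def tmap {K H A : Type} [CommRing K] [Ring H] [Bialgebra K H]
    [Ring A] [Algebra K A]
    (act : H →ₗ[K] A →ₗ[K] A) (a : A) (G : H ⊗[K] H) : A ⊗[K] H :=
  (TensorProduct.comm K H A) ((TensorProduct.map LinearMap.id (act.flip a)) G)

/-- The bialgebroid counit `ε̃(a ⋊ L) = ε(L) a` of the smash product `A ⋊ H`. -/
noncomputable def epsSm (K H A : Type) [CommRing K] [Ring H] [Bialgebra K H]
    [Ring A] [Algebra K A] : A ⊗[K] H →ₗ[K] A :=
  (TensorProduct.rid K A).toLinearMap ∘ₗ TensorProduct.map LinearMap.id Coalgebra.counit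

/-- for a commutative module algebra `A`, the twisted star product
`⋆_F` is braided commutative w.r.t. the triangular R-matrix `R = F₂₁ F⁻¹`:
`(R₂ ▷ b) ⋆_F (R₁ ▷ a) = a ⋆_F b`. -/
theorem star_product_braided_commutative
    {K H A : Type} [CommRing K] [Ring H] [Bialgebra K H] [CommRing A] [Algebra K A]
    (act : H →ₗ[K] A →ₗ[K] A)
    (hact_one : ∀ a : A, act 1 a = a)
    (hact_mul : ∀ (L J : H) (a : A), act (L * J) a = act L (act J a))
    (hact_unit : ∀ L : H, act L (1 : A) = Coalgebra.counit (R := K) L • (1 : A))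
    (hact_alg : ∀ (L : H) (a b : A) (n : ℕ) (L1 L2 : Fin n → H),
      Coalgebra.comul (R := K) L = ∑ i, L1 i ⊗ₜ[K] L2 i →
      act L (a * b) = ∑ i, act (L1 i) a * act (L2 i) b)
    -- F is a normalized cocycle twist
    (F Finv : H ⊗[K] H)
    (hinv₁ : F * Finv = 1) (hinv₂ : Finv * F = 1)
    (hcoc : leg12 K H F * copL K H F = leg23 K H F * copR K H F)
    (hnorm₁ : ctL K H F = 1) (hnorm₂ : ctR K H F = 1) :
    ∀ (a b : A) (n : ℕ) (r1 r2 : Fin n → H),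
      TensorProduct.comm K H H F * Finv = ∑ i, r1 i ⊗ₜ[K] r2 i →
      ∑ i, starF act Finv (act (r2 i) b) (act (r1 i) a) = starF act Finv a b := by
  intro a b n r1 r2 hR
  -- multiplicativity of the flip on H ⊗ H
  have hcm : ∀ u v : H ⊗[K] H,
      (TensorProduct.comm K H H) (u * v)
        = (TensorProduct.comm K H H) u * (TensorProduct.comm K H H) v := by
    intro u v
    exact map_mul (Algebra.TensorProduct.comm K H H) u v
  -- key lemma: absorb the actions into right multiplication on the twist
  have key : ∀ (y x : H) (G : H ⊗[K] H),
      LinearMap.mul' K A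
        ((TensorProduct.map (act.flip (act y b)) (act.flip (act x a))) G)
      = LinearMap.mul' K A
        ((TensorProduct.map (act.flip b) (act.flip a)) (G * (y ⊗ₜ[K] x))) := by
    intro y x G
    induction G using TensorProduct.induction_on with
    | zero => simp
    | tmul u v =>
        simp [Algebra.TensorProduct.tmul_mul_tmul, LinearMap.flip_apply, hact_mul]
    | add p q hp hq => simp [add_mul, hp, hq]
  -- flipping the twist in the star product, using commutativity of A
  have swap : ∀ G : H ⊗[K] H,
      LinearMap.mul' K A
        ((TensorProduct.map (act.flip b) (act.flip a)) ((TensorProduct.comm K H H) G))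
      = LinearMap.mul' K A
        ((TensorProduct.map (act.flip a) (act.flip b)) G) := by
    intro G
    induction G using TensorProduct.induction_on with
    | zero => simp
    | tmul u v => simp [LinearMap.flip_apply, mul_comm]
    | add p q hp hq => simp [hp, hq]
  have hflip : (∑ i, r2 i ⊗ₜ[K] r1 i)
      = (TensorProduct.comm K H H) ((TensorProduct.comm K H H) F * Finv) := by
    rw [hR, map_sum]
    simp
  calc ∑ i, starF act Finv (act (r2 i) b) (act (r1 i) a)
      = ∑ i, LinearMap.mul' K A
          ((TensorProduct.map (act.flip b) (act.flip a)) (Finv * (r2 i ⊗ₜ[K] r1 i))) := by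
        exact Finset.sum_congr rfl fun i _ => key (r2 i) (r1 i) Finv
    _ = LinearMap.mul' K A
          ((TensorProduct.map (act.flip b) (act.flip a)) (Finv * ∑ i, r2 i ⊗ₜ[K] r1 i)) := by
        rw [Finset.mul_sum, map_sum, map_sum]
    _ = starF act Finv a b := by
        have h1 : ∀ G : H ⊗[K] H,
            (TensorProduct.comm K H H) ((TensorProduct.comm K H H) G) = G := by
          intro G
          induction G using TensorProduct.induction_on with
          | zero => simp
          | tmul u v => simp
          | add p q hp hq => simp [hp, hq]
        rw [hflip, hcm, h1, ← mul_assoc, hinv₂, one_mul, swap]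
        rfl
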